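/- Slope formula for the log norm functional along an arc: let V, W be finite-dimensional Hermitian complex vector spaces, G a linear algebraic group acting linearly on V and W, ρ an arc in G extending to a map z ↦ ρ(z) ∈ G on a punctured disc whose matrix entries are convergent Laurent series, and v ∈ V, w ∈ W nonzero. Define f(g) = log|g.v| − log|g.w|. Then f(ρ(z)) = ν(ρ,[v,w])·log|z|⁻¹ + O(1) as z → 0. -/

import Mathlib

open Filter

private lemma log_norm_one_side {p : ℕ}
    (a : Fin p → ℂ → ℂ) (na : Fin p → ℤ) (ga : Fin p → ℂ → ℂ)
    (Sa : Finset (Fin p)) (hSa : Sa.Nonempty)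
    (hga : ∀ i ∈ Sa, AnalyticAt ℂ (ga i) 0 ∧ ga i 0 ≠ 0 ∧
      ∀ z, a i z = z ^ (na i) * ga i z)
    (ha0 : ∀ i ∉ Sa, ∀ z, a i z = 0) :
    ∃ C : ℝ, ∀ᶠ z in nhdsWithin (0 : ℂ) {0}ᶜ,
      |Real.log (Real.sqrt (∑ i, ‖(a i z)‖ ^ 2))
        - ((Sa.inf' hSa na : ℤ) : ℝ) * Real.log (‖z‖)| ≤ C := by
  set m : ℤ := Sa.inf' hSa na with hm
  set B : ℂ → ℝ := fun z =>
    ∑ i ∈ Sa, (‖z‖ ^ (na i - m).toNat * ‖(ga i z)‖) ^ 2 with hB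
  -- continuity of B at 0
  have hBc : ContinuousAt B 0 := by
    apply tendsto_finset_sum
    intro i hi
    exact ((((continuous_norm.continuousAt).pow _).mul
      ((continuous_norm.continuousAt).comp (hga i hi).1.continuousAt)).pow 2)
  -- positivity of B 0
  obtain ⟨i0, hi0, hmi0⟩ := Finset.exists_mem_eq_inf' hSa na
  have hB0 : 0 < B 0 := by
    have hz0 : (na i0 - m).toNat = 0 := by rw [hm, hmi0]; simp
    have h1 : (0:ℝ) < (‖(0:ℂ)‖ ^ (na i0 - m).toNat * ‖(ga i0 0)‖) ^ 2 := by
      rw [hz0, pow_zero, one_mul]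
      exact pow_pos (norm_pos_iff.mpr (hga i0 hi0).2.1) 2
    have h2 : (‖(0:ℂ)‖ ^ (na i0 - m).toNat * ‖(ga i0 0)‖) ^ 2
        ≤ ∑ i ∈ Sa, (‖(0:ℂ)‖ ^ (na i - m).toNat * ‖(ga i 0)‖) ^ 2 :=
      Finset.single_le_sum (f := fun i => (‖(0:ℂ)‖ ^ (na i - m).toNat * ‖(ga i 0)‖) ^ 2) (fun i _ => sq_nonneg _) hi0
    calc (0:ℝ) < _ := h1
      _ ≤ _ := h2
  -- key identity for z ≠ 0
  have key : ∀ z : ℂ, z ≠ 0 →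
      (∑ i, ‖(a i z)‖ ^ 2) = (‖z‖ ^ m) ^ 2 * B z := by
    intro z hz
    have hz' : ‖z‖ ≠ 0 := by simpa using hz
    rw [hB, Finset.mul_sum]
    rw [← Finset.sum_subset (Finset.subset_univ Sa)
      (fun i _ hi => by rw [ha0 i hi z]; simp)]
    refine Finset.sum_congr rfl fun i hi => ?_
    obtain ⟨hana, hg0, hfor⟩ := hga i hi
    have hk : ((na i - m).toNat : ℤ) = na i - m :=
      Int.toNat_of_nonneg (sub_nonneg.mpr (Finset.inf'_le na hi))
    have hpow : ‖z‖ ^ na i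
        = ‖z‖ ^ m * ‖z‖ ^ (na i - m).toNat := by
      rw [← zpow_natCast, hk, ← zpow_add₀ hz']
      ring_nf
    rw [hfor z, norm_mul, norm_zpow, hpow]
    ring
  -- bound on log sqrt B
  have hsB : ContinuousAt (fun z => Real.log (Real.sqrt (B z))) 0 := by
    refine (Real.continuousAt_log ?_).comp ((Real.continuous_sqrt.continuousAt).comp hBc)
    show Real.sqrt (B 0) ≠ 0
    positivity
  refine ⟨|Real.log (Real.sqrt (B 0))| + 1, ?_⟩
  have hev1 : ∀ᶠ z in nhds (0:ℂ), 0 < B z := hBc.eventually (eventually_gt_nhds hB0)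
  have hev2 : ∀ᶠ z in nhds (0:ℂ),
      |Real.log (Real.sqrt (B z)) - Real.log (Real.sqrt (B 0))| < 1 := by
    have h := Metric.tendsto_nhds.mp hsB.tendsto 1 one_pos
    simpa [Real.dist_eq] using h
  filter_upwards [nhdsWithin_le_nhds hev1, nhdsWithin_le_nhds hev2,
    self_mem_nhdsWithin] with z hz1 hz2 hz3
  have hz : z ≠ 0 := by simpa using hz3
  have hz' : (0:ℝ) < ‖z‖ := norm_pos_iff.mpr hz
  have hzp : (0:ℝ) < ‖z‖ ^ m := zpow_pos hz' m
  have h1 : Real.log (Real.sqrt (∑ i, ‖(a i z)‖ ^ 2))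
      = (m : ℝ) * Real.log (‖z‖) + Real.log (Real.sqrt (B z)) := by
    rw [key z hz, Real.sqrt_mul (sq_nonneg _), Real.sqrt_sq hzp.le,
      Real.log_mul hzp.ne' (Real.sqrt_pos.mpr hz1).ne', Real.log_zpow]
  rw [h1]
  have heq : (m:ℝ) * Real.log (‖z‖) + Real.log (Real.sqrt (B z))
      - (m:ℝ) * Real.log (‖z‖) = Real.log (Real.sqrt (B z)) := by ring
  rw [heq]
  linarith [abs_sub_abs_le_abs_sub (Real.log (Real.sqrt (B z)))
    (Real.log (Real.sqrt (B 0))), hz2]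

/-- Slope formula for the log norm functional along an arc.
In coordinate systems orthonormal for the Hermitian inner products on `V` and
`W`, the coordinates of `ρ(z).v` form a tuple `a i z` of convergent Laurent
series (equal to `z^(na i) * ga i z` with `ga i` holomorphic, `ga i 0 ≠ 0`, for
`i` in the nonempty set `Sa` of nonvanishing coordinates, and identically zero
otherwise), and likewise `b j z` for `ρ(z).w`.  The Hermitian norms are
`|ρ(z).v| = √(Σ|a i z|²)`, `|ρ(z).w| = √(Σ|b j z|²)`, the weight of the arc is
`ν = min_{j ∈ Sb} nb j − min_{i ∈ Sa} na i`, and the log norm functional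
`f(g) = log|g.v| − log|g.w|` satisfies
`f(ρ(z)) = ν·log|z|⁻¹ + O(1)` as `z → 0`. -/
theorem log_norm_slope_formula {p q : ℕ}
    (a : Fin p → ℂ → ℂ) (b : Fin q → ℂ → ℂ)
    (na : Fin p → ℤ) (nb : Fin q → ℤ)
    (ga : Fin p → ℂ → ℂ) (gb : Fin q → ℂ → ℂ)
    (Sa : Finset (Fin p)) (Sb : Finset (Fin q))
    (hSa : Sa.Nonempty) (hSb : Sb.Nonempty)
    (hga : ∀ i ∈ Sa, AnalyticAt ℂ (ga i) 0 ∧ ga i 0 ≠ 0 ∧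
      ∀ z, a i z = z ^ (na i) * ga i z)
    (ha0 : ∀ i ∉ Sa, ∀ z, a i z = 0)
    (hgb : ∀ j ∈ Sb, AnalyticAt ℂ (gb j) 0 ∧ gb j 0 ≠ 0 ∧
      ∀ z, b j z = z ^ (nb j) * gb j z)
    (hb0 : ∀ j ∉ Sb, ∀ z, b j z = 0)
    (ν : ℤ) (hν : ν = Sb.inf' hSb nb - Sa.inf' hSa na) :
    ∃ C : ℝ, ∀ᶠ z in nhdsWithin (0 : ℂ) {0}ᶜ,
      |(Real.log (Real.sqrt (∑ i, ‖(a i z)‖ ^ 2))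
          - Real.log (Real.sqrt (∑ j, ‖(b j z)‖ ^ 2)))
        - (ν : ℝ) * Real.log ((‖z‖)⁻¹)| ≤ C := by
  obtain ⟨Ca, hCa⟩ := log_norm_one_side a na ga Sa hSa hga ha0
  obtain ⟨Cb, hCb⟩ := log_norm_one_side b nb gb Sb hSb hgb hb0
  refine ⟨Ca + Cb, ?_⟩
  filter_upwards [hCa, hCb] with z h1 h2
  have hνR : (ν : ℝ) = ((Sb.inf' hSb nb : ℤ) : ℝ) - ((Sa.inf' hSa na : ℤ) : ℝ) := by
    rw [hν]; push_cast; ring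
  have e : (Real.log (Real.sqrt (∑ i, ‖(a i z)‖ ^ 2))
          - Real.log (Real.sqrt (∑ j, ‖(b j z)‖ ^ 2)))
        - (ν : ℝ) * Real.log ((‖z‖)⁻¹)
      = (Real.log (Real.sqrt (∑ i, ‖(a i z)‖ ^ 2))
          - ((Sa.inf' hSa na : ℤ) : ℝ) * Real.log (‖z‖))
        - (Real.log (Real.sqrt (∑ j, ‖(b j z)‖ ^ 2))
          - ((Sb.inf' hSb nb : ℤ) : ℝ) * Real.log (‖z‖)) := by
    rw [Real.log_inv, hνR]; ring
  rw [e]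
  calc |_ - _| ≤ |_| + |_| := abs_sub _ _
    _ ≤ Ca + Cb := add_le_add h1 h2
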